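/- Let m be a nonnegative integer. Each of the polynomials X^{2^m} − i and X^{2^m} + i is irreducible over the field ℚ(i) of Gaussian rationals. -/

import Mathlib

open Polynomial IntermediateField

set_option maxHeartbeats 1000000
set_option synthInstance.maxHeartbeats 1000000

lemma aux_I4 : IsPrimitiveRoot Complex.I 4 := by
  have h4 : Complex.I ^ 4 = 1 := by
    calc Complex.I ^ 4 = (Complex.I ^ 2) ^ 2 := by ring
    _ = 1 := by rw [Complex.I_sq]; norm_num
  constructor
  · exact h4
  · intro l hl
    rw [← Nat.div_add_mod l 4, pow_add, pow_mul, h4, one_pow, one_mul] at hl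
    have hlt : l % 4 < 4 := Nat.mod_lt l (by norm_num)
    interval_cases h : l % 4
    · exact Nat.dvd_of_mod_eq_zero h
    · simp [Complex.ext_iff] at hl
    · rw [pow_two, Complex.I_mul_I] at hl; norm_num at hl
    · rw [pow_succ, pow_two, Complex.I_mul_I, neg_one_mul] at hl
      simp [Complex.ext_iff] at hl

lemma aux (m : ℕ) (z : ℂ) (hz : IsPrimitiveRoot z (2 ^ (m + 2)))
    (hI : Complex.I ∈ IntermediateField.adjoin ℚ ({z} : Set ℂ))
    (c : ℚ⟮Complex.I⟯) (hc : z ^ (2 ^ m) = (c : ℂ)) :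
    Irreducible ((X : Polynomial ℚ⟮Complex.I⟯) ^ (2 ^ m) - C c) := by
  have hNpos : 0 < 2 ^ (m + 2) := by positivity
  have hzQ : IsIntegral ℚ z := (hz.isIntegral hNpos).tower_top
  have hzK : IsIntegral ℚ⟮Complex.I⟯ z := hzQ.tower_top
  have h1 : Module.finrank ℚ ℚ⟮z⟯ = 2 ^ (m + 1) := by
    rw [IntermediateField.adjoin.finrank hzQ, ← cyclotomic_eq_minpoly_rat hz hNpos,
      natDegree_cyclotomic, Nat.totient_prime_pow Nat.prime_two (by omega)]
    simp
  have hIQ : IsIntegral ℚ Complex.I := (aux_I4.isIntegral (by norm_num)).tower_top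
  have h2 : Module.finrank ℚ ℚ⟮Complex.I⟯ = 2 := by
    rw [IntermediateField.adjoin.finrank hIQ, ← cyclotomic_eq_minpoly_rat aux_I4 (by norm_num),
      natDegree_cyclotomic]
    decide
  have h3 : (IntermediateField.adjoin ℚ⟮Complex.I⟯ ({z} : Set ℂ)).restrictScalars ℚ
      = IntermediateField.adjoin ℚ ({z} : Set ℂ) := by
    erw [IntermediateField.adjoin_adjoin_left]
    apply le_antisymm
    · rw [IntermediateField.adjoin_le_iff]
      rintro x (rfl | rfl)
      · exact hI
      · exact IntermediateField.subset_adjoin _ _ rfl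
    · exact IntermediateField.adjoin.mono _ _ _ (by simp)
  have h4 : Module.finrank ℚ ℚ⟮Complex.I⟯ * Module.finrank ℚ⟮Complex.I⟯ ℚ⟮Complex.I⟯⟮z⟯
      = 2 ^ (m + 1) := by
    rw [Module.finrank_mul_finrank ℚ ℚ⟮Complex.I⟯ ℚ⟮Complex.I⟯⟮z⟯, ← h1, ← h3]
    rfl
  have h5 : Module.finrank ℚ⟮Complex.I⟯ ℚ⟮Complex.I⟯⟮z⟯ = 2 ^ m := by
    rw [h2] at h4
    have : (2:ℕ) ^ (m+1) = 2 * 2 ^ m := by ring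
    omega
  have h6 : (minpoly ℚ⟮Complex.I⟯ z).natDegree = 2 ^ m := by
    rw [← IntermediateField.adjoin.finrank hzK, h5]
  have hfm : Monic ((X : Polynomial ℚ⟮Complex.I⟯) ^ (2 ^ m) - C c) :=
    monic_X_pow_sub_C c (by positivity)
  have hfd : ((X : Polynomial ℚ⟮Complex.I⟯) ^ (2 ^ m) - C c).natDegree = 2 ^ m :=
    natDegree_X_pow_sub_C
  have hroot : Polynomial.aeval z ((X : Polynomial ℚ⟮Complex.I⟯) ^ (2 ^ m) - C c) = 0 := by
    simp only [map_sub, map_pow, aeval_X, aeval_C]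
    rw [show (algebraMap ℚ⟮Complex.I⟯ ℂ) c = (c : ℂ) from rfl, ← hc, sub_self]
  obtain ⟨q, hq⟩ := minpoly.dvd ℚ⟮Complex.I⟯ z hroot
  have hfne : ((X : Polynomial ℚ⟮Complex.I⟯) ^ (2 ^ m) - C c) ≠ 0 := hfm.ne_zero
  have hmne : minpoly ℚ⟮Complex.I⟯ z ≠ 0 := minpoly.ne_zero hzK
  have hqne : q ≠ 0 := by rintro rfl; rw [mul_zero] at hq; exact hfne hq
  have hqd : q.natDegree = 0 := by
    have := congrArg natDegree hq
    rw [natDegree_mul hmne hqne, hfd, h6] at this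
    omega
  have hqu : IsUnit q := by
    rw [Polynomial.eq_C_of_natDegree_eq_zero hqd]
    exact Polynomial.isUnit_C.mpr (isUnit_iff_ne_zero.mpr (fun h0 => hqne (by
      rw [Polynomial.eq_C_of_natDegree_eq_zero hqd, h0, map_zero])))
  have hassoc : Associated (minpoly ℚ⟮Complex.I⟯ z)
      ((X : Polynomial ℚ⟮Complex.I⟯) ^ (2 ^ m) - C c) := ⟨hqu.unit, by rw [hq]; rfl⟩
  exact hassoc.irreducible (minpoly.irreducible hzK)

/-- for a nonnegative integer m, each of X^{2^m} − i and X^{2^m} + i is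
irreducible over the field ℚ(i) of Gaussian rationals. -/
theorem stmt9 (m : ℕ) :
    Irreducible ((X : Polynomial ℚ⟮Complex.I⟯) ^ (2 ^ m) -
      C (⟨Complex.I, IntermediateField.mem_adjoin_simple_self ℚ Complex.I⟩ : ℚ⟮Complex.I⟯)) ∧
    Irreducible ((X : Polynomial ℚ⟮Complex.I⟯) ^ (2 ^ m) +
      C (⟨Complex.I, IntermediateField.mem_adjoin_simple_self ℚ Complex.I⟩ : ℚ⟮Complex.I⟯)) := by
  set iK : ℚ⟮Complex.I⟯ := ⟨Complex.I, IntermediateField.mem_adjoin_simple_self ℚ Complex.I⟩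
    with hiK
  set z : ℂ := Complex.exp (2 * Real.pi * Complex.I / (2 ^ (m + 2) : ℕ)) with hzdef
  have hz : IsPrimitiveRoot z (2 ^ (m + 2)) :=
    Complex.isPrimitiveRoot_exp _ (by positivity)
  have hpow : z ^ (2 ^ m) = Complex.I := by
    rw [hzdef, ← Complex.exp_nat_mul]
    have harg : (2 ^ m : ℕ) * (2 * (Real.pi:ℂ) * Complex.I / (2 ^ (m + 2) : ℕ))
        = (Real.pi:ℂ) / 2 * Complex.I := by
      have h22 : ((2:ℂ) ^ (m + 2)) = 2 ^ m * 4 := by rw [pow_add]; norm_num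
      have h2m : (2:ℂ) ^ m ≠ 0 := pow_ne_zero _ two_ne_zero
      push_cast
      rw [h22]
      field_simp
      ring
    rw [harg, Complex.exp_mul_I, Complex.cos_pi_div_two, Complex.sin_pi_div_two]
    ring
  constructor
  · exact aux m z hz (hpow ▸ pow_mem (mem_adjoin_simple_self ℚ z) (2 ^ m)) iK hpow
  · -- second: X^(2^m) + C iK = X^(2^m) - C (-iK)
    have hw : IsPrimitiveRoot (z ^ 3) (2 ^ (m + 2)) :=
      hz.pow_of_coprime 3 (Nat.Coprime.pow_right _ (by norm_num))
    have hpow3 : (z ^ 3) ^ (2 ^ m) = ((-iK : ℚ⟮Complex.I⟯) : ℂ) := by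
      have h1 : (z ^ 3) ^ (2 ^ m) = (z ^ (2 ^ m)) ^ 3 := by ring
      rw [h1, hpow]
      have : ((-iK : ℚ⟮Complex.I⟯) : ℂ) = -Complex.I := by rw [hiK]; rfl
      rw [this]
      calc Complex.I ^ 3 = Complex.I ^ 2 * Complex.I := by ring
      _ = -Complex.I := by rw [Complex.I_sq]; ring
    have hI3 : Complex.I ∈ IntermediateField.adjoin ℚ ({z ^ 3} : Set ℂ) := by
      have hmem : (z ^ 3) ^ (2 ^ m) ∈ IntermediateField.adjoin ℚ ({z ^ 3} : Set ℂ) :=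
        pow_mem (mem_adjoin_simple_self ℚ (z ^ 3)) (2 ^ m)
      have hval : -((z ^ 3) ^ (2 ^ m)) = Complex.I := by
        rw [hpow3]
        have : ((-iK : ℚ⟮Complex.I⟯) : ℂ) = -Complex.I := by rw [hiK]; rfl
        rw [this, neg_neg]
      exact hval ▸ neg_mem hmem
    have := aux m (z ^ 3) hw hI3 (-iK) hpow3
    rwa [map_neg, sub_neg_eq_add] at this
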